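/- Let g, h ∈ GL(d,ℝ) and p ∈ {1,…,d−1}. Suppose that g, h and gh all have a gap of index p. Then d(U_p(gh), U_p(g)) ≤ ‖h‖·‖h⁻¹‖·σ_{p+1}(g)/σ_p(g). -/

import Mathlib

noncomputable section

open scoped Matrix RealInnerProductSpace
open Filter Topology

namespace Paper

abbrev Euc (d : ℕ) : Type := EuclideanSpace ℝ (Fin d)

/-- The action of a `d × d` real matrix on Euclidean space. -/
def act {d : ℕ} (g : Matrix (Fin d) (Fin d) ℝ) (v : Euc d) : Euc d :=
  Matrix.toEuclideanCLM (𝕜 := ℝ) g v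

/-- The operator norm of a matrix acting on Euclidean space. -/
def opNorm {d : ℕ} (g : Matrix (Fin d) (Fin d) ℝ) : ℝ :=
  ‖(Matrix.toEuclideanCLM (𝕜 := ℝ) g : Euc d →L[ℝ] Euc d)‖

/-- The underlying matrix of an element of `GL (Fin d) ℝ`. -/
def mat {d : ℕ} (g : GL (Fin d) ℝ) : Matrix (Fin d) (Fin d) ℝ := ↑g

/-- The `p`-th singular value (`1`-indexed), via the min-max characterization:
`σ_p(g)` is the largest, over `p`-dimensional subspaces `P`, of the minimal
stretch of unit vectors of `P`. -/
def sv {d : ℕ} (g : Matrix (Fin d) (Fin d) ℝ) (p : ℕ) : ℝ :=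
  sSup { r | ∃ P : Submodule ℝ (Euc d), Module.finrank ℝ P = p ∧
      r = sInf { t | ∃ v ∈ P, ‖v‖ = 1 ∧ t = ‖act g v‖ } }

/-- `g` has a gap of index `p` if `σ_p(g) > σ_{p+1}(g)`. -/
def HasGap {d : ℕ} (g : Matrix (Fin d) (Fin d) ℝ) (p : ℕ) : Prop :=
  sv g (p + 1) < sv g p

/-- `U` is a Cartan attractor of index `p` for `g`: for some singular value
decomposition `g = k·a·l` (`k`, `l` orthogonal, `a` diagonal with decreasing
nonnegative entries), `U` is the span of the first `p` columns of `k`. -/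
def IsCartanAttractor {d : ℕ} (g : Matrix (Fin d) (Fin d) ℝ) (p : ℕ)
    (U : Submodule ℝ (Euc d)) : Prop :=
  ∃ k l : Matrix (Fin d) (Fin d) ℝ, ∃ σ : Fin d → ℝ,
    k ∈ Matrix.unitaryGroup (Fin d) ℝ ∧ l ∈ Matrix.unitaryGroup (Fin d) ℝ ∧
    (∀ i j : Fin d, i ≤ j → σ j ≤ σ i) ∧ (∀ i, 0 ≤ σ i) ∧
    g = k * Matrix.diagonal σ * l ∧
    U = Submodule.span ℝ { x : Euc d | ∃ i : Fin d, (i : ℕ) < p ∧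
          x = (EuclideanSpace.equiv (Fin d) ℝ).symm (fun j => k j i) }

/-- The Cartan attractor `U_p(g)`; when `g` has a gap of index `p` it is the
unique subspace satisfying `IsCartanAttractor g p`. -/
def cartanAttractor {d : ℕ} (g : Matrix (Fin d) (Fin d) ℝ) (p : ℕ) :
    Submodule ℝ (Euc d) :=
  letI := Classical.propDecidable (∃ U, IsCartanAttractor g p U)
  if h : ∃ U, IsCartanAttractor g p U then h.choose else ⊥

/-- The angle `∠(P,Q)` between two subspaces: the infimum of angles between
nonzero vectors of `P` and `Q`. -/
def subAngle {d : ℕ} (P Q : Submodule ℝ (Euc d)) : ℝ :=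
  sInf { θ | ∃ v ∈ P, v ≠ 0 ∧ ∃ w ∈ Q, w ≠ 0 ∧ θ = InnerProductGeometry.angle v w }

/-- `sin ∠(v,w)`. -/
def sinAngle {d : ℕ} (v w : Euc d) : ℝ := Real.sin (InnerProductGeometry.angle v w)

/-- The distance `d(P,Q) = max_{v ∈ P∖{0}} min_{w ∈ Q∖{0}} sin ∠(v,w)`. -/
def grassDist {d : ℕ} (P Q : Submodule ℝ (Euc d)) : ℝ :=
  sSup { r | ∃ v ∈ P, v ≠ 0 ∧
      r = sInf { s | ∃ w ∈ Q, w ≠ 0 ∧ s = sinAngle v w } }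

/-- The image `g·P` of a subspace under a matrix. -/
def mapMat {d : ℕ} (g : Matrix (Fin d) (Fin d) ℝ) (P : Submodule ℝ (Euc d)) :
    Submodule ℝ (Euc d) :=
  P.map ((Matrix.toEuclideanCLM (𝕜 := ℝ) g : Euc d →L[ℝ] Euc d) : Euc d →ₗ[ℝ] Euc d)

/-- `m(g|_W)`, the minimal stretch of unit vectors of `W` under `g`. -/
def minRestrict {d : ℕ} (g : Matrix (Fin d) (Fin d) ℝ) (W : Submodule ℝ (Euc d)) : ℝ :=
  sInf { t | ∃ v ∈ W, ‖v‖ = 1 ∧ t = ‖act g v‖ }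

/-- `‖g|_W‖`, the maximal stretch of unit vectors of `W` under `g`. -/
def normRestrict {d : ℕ} (g : Matrix (Fin d) (Fin d) ℝ) (W : Submodule ℝ (Euc d)) : ℝ :=
  sSup { t | ∃ v ∈ W, ‖v‖ = 1 ∧ t = ‖act g v‖ }



/-! ### Auxiliary lemmas -/

section Aux

variable {d : ℕ}

lemma act_apply (g : Matrix (Fin d) (Fin d) ℝ) (v : Euc d) (j : Fin d) :
    act g v j = ∑ i, g j i * v i := rfl

lemma act_mul (A B : Matrix (Fin d) (Fin d) ℝ) (v : Euc d) :
    act (A * B) v = act A (act B v) := by simp [act, map_mul]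

lemma act_one (v : Euc d) : act 1 v = v := by simp [act]

lemma act_add (A : Matrix (Fin d) (Fin d) ℝ) (v w : Euc d) :
    act A (v + w) = act A v + act A w := by simp [act]

lemma act_sub (A : Matrix (Fin d) (Fin d) ℝ) (v w : Euc d) :
    act A (v - w) = act A v - act A w := by simp [act]

lemma act_smul (A : Matrix (Fin d) (Fin d) ℝ) (c : ℝ) (v : Euc d) :
    act A (c • v) = c • act A v := by simp [act]

lemma act_zero (A : Matrix (Fin d) (Fin d) ℝ) : act A 0 = 0 := by simp [act]

lemma act_sum (A : Matrix (Fin d) (Fin d) ℝ) {ι : Type*} (s : Finset ι) (f : ι → Euc d) :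
    act A (∑ i ∈ s, f i) = ∑ i ∈ s, act A (f i) :=
  map_sum (Matrix.toEuclideanCLM (𝕜 := ℝ) A) f s

lemma norm_act_le (A : Matrix (Fin d) (Fin d) ℝ) (v : Euc d) :
    ‖act A v‖ ≤ opNorm A * ‖v‖ :=
  (Matrix.toEuclideanCLM (𝕜 := ℝ) A).le_opNorm v

lemma opNorm_nonneg (A : Matrix (Fin d) (Fin d) ℝ) : 0 ≤ opNorm A := norm_nonneg _

lemma inner_act_left (A : Matrix (Fin d) (Fin d) ℝ) (v w : Euc d) :
    ⟪act A v, w⟫ = ⟪v, act (star A) w⟫ := by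
  simp only [act, map_star]
  rw [ContinuousLinearMap.star_eq_adjoint, ContinuousLinearMap.adjoint_inner_right]

lemma inner_act_unitary {k : Matrix (Fin d) (Fin d) ℝ}
    (hk : k ∈ Matrix.unitaryGroup (Fin d) ℝ) (v w : Euc d) :
    ⟪act k v, act k w⟫ = ⟪v, w⟫ := by
  rw [inner_act_left, ← act_mul, Matrix.mem_unitaryGroup_iff'.mp hk, act_one]

lemma norm_act_unitary {k : Matrix (Fin d) (Fin d) ℝ}
    (hk : k ∈ Matrix.unitaryGroup (Fin d) ℝ) (v : Euc d) : ‖act k v‖ = ‖v‖ := by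
  rw [norm_eq_sqrt_real_inner, inner_act_unitary hk, ← norm_eq_sqrt_real_inner]

lemma act_star_act_unitary {k : Matrix (Fin d) (Fin d) ℝ}
    (hk : k ∈ Matrix.unitaryGroup (Fin d) ℝ) (v : Euc d) :
    act (star k) (act k v) = v := by
  rw [← act_mul, Matrix.mem_unitaryGroup_iff'.mp hk, act_one]

lemma act_act_star_unitary {k : Matrix (Fin d) (Fin d) ℝ}
    (hk : k ∈ Matrix.unitaryGroup (Fin d) ℝ) (v : Euc d) :
    act k (act (star k) v) = v := by
  rw [← act_mul, Matrix.mem_unitaryGroup_iff.mp hk, act_one]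

/-- The `i`-th column of a matrix, as a vector of Euclidean space. -/
def col (k : Matrix (Fin d) (Fin d) ℝ) (i : Fin d) : Euc d :=
  (EuclideanSpace.equiv (Fin d) ℝ).symm (fun j => k j i)

lemma act_single (k : Matrix (Fin d) (Fin d) ℝ) (i : Fin d) :
    act k (EuclideanSpace.single i 1) = col k i := by
  ext j; simp [act_apply, col, EuclideanSpace.single_apply]

lemma eucl_decomp (v : Euc d) : v = ∑ i, v i • EuclideanSpace.single i (1:ℝ) := by
  have h := (EuclideanSpace.basisFun (Fin d) ℝ).sum_repr v
  simpa [EuclideanSpace.basisFun_apply, EuclideanSpace.basisFun_repr] using h.symm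

lemma norm_sq_eq (v : Euc d) : ‖v‖^2 = ∑ i, v i ^ 2 := by
  rw [EuclideanSpace.norm_eq, Real.sq_sqrt (by positivity)]
  simp [sq_abs]

lemma mem_span_cols {k : Matrix (Fin d) (Fin d) ℝ}
    (hk : k ∈ Matrix.unitaryGroup (Fin d) ℝ) (π : Fin d → Prop) [DecidablePred π]
    (v : Euc d) :
    v ∈ Submodule.span ℝ {x : Euc d | ∃ i, π i ∧ x = col k i} ↔
      ∀ j, ¬ π j → act (star k) v j = 0 := by
  constructor
  · intro hv
    refine Submodule.span_induction ?_ ?_ ?_ ?_ hv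
    · rintro x ⟨i, hi, rfl⟩ j hj
      rw [← act_single, act_star_act_unitary hk]
      simp [EuclideanSpace.single_apply]
      intro h; exact absurd (h ▸ hi) hj
    · intro j _; simp [act_zero]
    · intro x y _ _ hx hy j hj
      rw [act_add]
      have : (act (star k) x + act (star k) y) j = act (star k) x j + act (star k) y j := rfl
      rw [this, hx j hj, hy j hj, add_zero]
    · intro a x _ hx j hj
      rw [act_smul]
      have : (a • act (star k) x) j = a * act (star k) x j := rfl
      rw [this, hx j hj, mul_zero]
  · intro hv
    have h1 : v = act k (act (star k) v) := (act_act_star_unitary hk v).symm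
    rw [h1, eucl_decomp (act (star k) v), act_sum]
    refine Submodule.sum_mem _ ?_
    intro j _
    rw [act_smul, act_single]
    by_cases hj : π j
    · exact Submodule.smul_mem _ _ (Submodule.subset_span ⟨j, hj, rfl⟩)
    · rw [hv j hj, zero_smul]; exact Submodule.zero_mem _

lemma orthonormal_cols {k : Matrix (Fin d) (Fin d) ℝ}
    (hk : k ∈ Matrix.unitaryGroup (Fin d) ℝ) : Orthonormal ℝ (col k) := by
  have h := EuclideanSpace.basisFun (Fin d) ℝ |>.orthonormal
  rw [orthonormal_iff_ite] at h ⊢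
  intro i j
  rw [← act_single, ← act_single, inner_act_unitary hk]
  simpa [EuclideanSpace.basisFun_apply] using h i j

lemma finrank_span_cols {k : Matrix (Fin d) (Fin d) ℝ}
    (hk : k ∈ Matrix.unitaryGroup (Fin d) ℝ) (π : Fin d → Prop) [DecidablePred π] :
    Module.finrank ℝ (Submodule.span ℝ {x : Euc d | ∃ i, π i ∧ x = col k i}) =
      Fintype.card {i : Fin d // π i} := by
  have hset : {x : Euc d | ∃ i, π i ∧ x = col k i} =
      Set.range (fun i : {i : Fin d // π i} => col k i.1) := by
    ext x
    constructor
    · rintro ⟨i, hi, rfl⟩; exact ⟨⟨i, hi⟩, rfl⟩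
    · rintro ⟨⟨i, hi⟩, rfl⟩; exact ⟨i, hi, rfl⟩
  rw [hset]
  exact finrank_span_eq_card
    (((orthonormal_cols hk).comp _ Subtype.val_injective).linearIndependent)

lemma card_lt_filter (q : ℕ) (h : q ≤ d) :
    (Finset.filter (fun x : Fin d => (x:ℕ) < q) Finset.univ).card = q := by
  have : Finset.filter (fun x : Fin d => (x:ℕ) < q) Finset.univ
      = Finset.map (Fin.castLEEmb h) Finset.univ := by
    ext x
    simp only [Finset.mem_filter, Finset.mem_univ, true_and, Finset.mem_map]
    constructor
    · intro hx
      exact ⟨⟨x, hx⟩, rfl⟩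
    · rintro ⟨y, -, rfl⟩; simp
  rw [this, Finset.card_map, Finset.card_univ, Fintype.card_fin]

lemma card_lt_subtype (q : ℕ) (h : q ≤ d) :
    Fintype.card {i : Fin d // (i:ℕ) < q} = q := by
  rw [Fintype.card_subtype, card_lt_filter q h]

lemma card_ge_subtype (q : ℕ) (h : q ≤ d) :
    Fintype.card {i : Fin d // ¬ ((i:ℕ) < q)} = d - q := by
  have h2 : Fintype.card {i : Fin d // (i:ℕ) < q} = q := card_lt_subtype q h
  have := Fintype.card_subtype_compl (p := fun i : Fin d => (i:ℕ) < q)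
  simp only [this, h2, Fintype.card_fin]

lemma act_diagonal_apply (σ : Fin d → ℝ) (v : Euc d) (j : Fin d) :
    act (Matrix.diagonal σ) v j = σ j * v j := by
  rw [act_apply]
  simp [Matrix.diagonal_apply, Finset.sum_ite_eq' Finset.univ j]

lemma le_of_sq_le {a b : ℝ} (ha : 0 ≤ a) (hb : 0 ≤ b) (h : a^2 ≤ b^2) : a ≤ b := by
  nlinarith

lemma norm_act_diagonal_le (σ : Fin d → ℝ) (π : Fin d → Prop) [DecidablePred π]
    (c : Euc d) {B : ℝ} (hB : 0 ≤ B)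
    (hc : ∀ j, ¬ π j → c j = 0) (hσ : ∀ j, π j → |σ j| ≤ B) :
    ‖act (Matrix.diagonal σ) c‖ ≤ B * ‖c‖ := by
  refine le_of_sq_le (norm_nonneg _) (by positivity) ?_
  rw [mul_pow, norm_sq_eq, norm_sq_eq, Finset.mul_sum]
  refine Finset.sum_le_sum ?_
  intro j _
  rw [act_diagonal_apply]
  by_cases hj : π j
  · have h0 := hσ j hj
    have h1 : (σ j)^2 ≤ B^2 := by nlinarith [sq_abs (σ j), abs_nonneg (σ j)]
    calc (σ j * c j)^2 = (σ j)^2 * (c j)^2 := by ring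
      _ ≤ B^2 * c j ^ 2 := mul_le_mul_of_nonneg_right h1 (sq_nonneg _)
  · rw [hc j hj]; simp

lemma norm_act_diagonal_ge (σ : Fin d → ℝ) (π : Fin d → Prop) [DecidablePred π]
    (c : Euc d) {b : ℝ} (hb : 0 ≤ b)
    (hc : ∀ j, ¬ π j → c j = 0) (hσ : ∀ j, π j → b ≤ σ j) :
    b * ‖c‖ ≤ ‖act (Matrix.diagonal σ) c‖ := by
  refine le_of_sq_le (by positivity) (norm_nonneg _) ?_
  rw [mul_pow, norm_sq_eq, norm_sq_eq, Finset.mul_sum]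
  refine Finset.sum_le_sum ?_
  intro j _
  rw [act_diagonal_apply]
  by_cases hj : π j
  · have h0 := hσ j hj
    have h1 : b^2 ≤ (σ j)^2 := by nlinarith
    calc b^2 * (c j)^2 ≤ (σ j)^2 * (c j)^2 := mul_le_mul_of_nonneg_right h1 (sq_nonneg _)
      _ = (σ j * c j) ^ 2 := by ring
  · rw [hc j hj]; simp

end Aux


section CF

variable {d : ℕ}

/-- The set of stretches of unit vectors of `P` under `m`. -/
def stretchSet (m : Matrix (Fin d) (Fin d) ℝ) (P : Submodule ℝ (Euc d)) : Set ℝ :=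
  { t | ∃ v ∈ P, ‖v‖ = 1 ∧ t = ‖act m v‖ }

lemma sv_eq_sSup (m : Matrix (Fin d) (Fin d) ℝ) (p : ℕ) :
    sv m p = sSup { r | ∃ P : Submodule ℝ (Euc d), Module.finrank ℝ P = p ∧
      r = sInf (stretchSet m P) } := rfl

lemma stretchSet_bddBelow (m : Matrix (Fin d) (Fin d) ℝ) (P : Submodule ℝ (Euc d)) :
    BddBelow (stretchSet m P) := by
  refine ⟨0, ?_⟩
  rintro t ⟨v, -, -, rfl⟩
  exact norm_nonneg _

lemma exists_unit_of_ne_bot {P : Submodule ℝ (Euc d)} (hP : P ≠ ⊥) :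
    ∃ v ∈ P, ‖v‖ = 1 := by
  obtain ⟨x, hxP, hx⟩ := Submodule.ne_bot_iff P |>.mp hP
  exact ⟨‖x‖⁻¹ • x, P.smul_mem _ hxP, norm_smul_inv_norm hx⟩

lemma sInf_stretchSet_le_opNorm (m : Matrix (Fin d) (Fin d) ℝ) (P : Submodule ℝ (Euc d)) :
    sInf (stretchSet m P) ≤ opNorm m := by
  by_cases hP : P = ⊥
  · have he : stretchSet m P = ∅ := by
      ext t
      simp only [stretchSet, Set.mem_setOf_eq, Set.mem_empty_iff_false, iff_false]
      rintro ⟨v, hv, hv1, -⟩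
      rw [hP, Submodule.mem_bot] at hv
      rw [hv, norm_zero] at hv1
      norm_num at hv1
    rw [he, Real.sInf_empty]
    exact opNorm_nonneg m
  · obtain ⟨v, hvP, hv1⟩ := exists_unit_of_ne_bot hP
    refine le_trans (csInf_le (stretchSet_bddBelow m P) ⟨v, hvP, hv1, rfl⟩) ?_
    calc ‖act m v‖ ≤ opNorm m * ‖v‖ := norm_act_le m v
      _ = opNorm m := by rw [hv1, mul_one]

lemma sv_set_bddAbove (m : Matrix (Fin d) (Fin d) ℝ) (p : ℕ) :
    BddAbove { r | ∃ P : Submodule ℝ (Euc d), Module.finrank ℝ P = p ∧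
      r = sInf (stretchSet m P) } := by
  refine ⟨opNorm m, ?_⟩
  rintro r ⟨P, -, rfl⟩
  exact sInf_stretchSet_le_opNorm m P

/-- Courant–Fischer: the min-max singular value equals the diagonal entry of any SVD. -/
lemma sv_eq_of_svd (m k l : Matrix (Fin d) (Fin d) ℝ) (σ : Fin d → ℝ)
    (hk : k ∈ Matrix.unitaryGroup (Fin d) ℝ) (hl : l ∈ Matrix.unitaryGroup (Fin d) ℝ)
    (hσd : ∀ i j : Fin d, i ≤ j → σ j ≤ σ i) (hσ0 : ∀ i, 0 ≤ σ i)
    (hm : m = k * Matrix.diagonal σ * l) (q : ℕ) (hq1 : 1 ≤ q) (hqd : q ≤ d) :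
    sv m q = σ ⟨q - 1, by omega⟩ := by
  have hd : 0 < d := by omega
  set i₀ : Fin d := ⟨q - 1, by omega⟩ with hi₀
  have hi₀v : (i₀ : ℕ) = q - 1 := rfl
  have hls : star l ∈ Matrix.unitaryGroup (Fin d) ℝ := Unitary.star_mem hl
  have hact : ∀ v : Euc d, ‖act m v‖ = ‖act (Matrix.diagonal σ) (act l v)‖ := by
    intro v
    rw [hm, act_mul, act_mul, norm_act_unitary hk]
  refine le_antisymm ?_ ?_
  · -- upper bound
    rw [sv_eq_sSup]
    refine Real.sSup_le ?_ (hσ0 i₀)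
    rintro r ⟨P, hPrank, rfl⟩
    set W : Submodule ℝ (Euc d) :=
      Submodule.span ℝ {x : Euc d | ∃ i : Fin d, ¬ ((i:ℕ) < q - 1) ∧ x = col (star l) i} with hW
    have hWrank : Module.finrank ℝ W = d - (q - 1) := by
      rw [hW, finrank_span_cols hls]
      have := card_ge_subtype (d := d) (q-1) (by omega)
      convert this using 2
    have hinter : P ⊓ W ≠ ⊥ := by
      intro hbot
      have h1 := Submodule.finrank_sup_add_finrank_inf_eq P W
      rw [hbot] at h1
      have h2 : Module.finrank ℝ ↥(P ⊔ W) ≤ d := by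
        have := Submodule.finrank_le (P ⊔ W)
        simpa using this
      rw [finrank_bot] at h1
      omega
    obtain ⟨v, hvPW, hv1⟩ := exists_unit_of_ne_bot hinter
    have hvP : v ∈ P := hvPW.1
    have hvW : v ∈ W := hvPW.2
    refine le_trans (csInf_le (stretchSet_bddBelow m P) ⟨v, hvP, hv1, rfl⟩) ?_
    have hc0 : ∀ j : Fin d, ¬ ¬ ((j:ℕ) < q - 1) → act (star (star l)) v j = 0 :=
      (mem_span_cols hls (fun i => ¬ ((i:ℕ) < q - 1)) v).mp hvW
    rw [star_star] at hc0
    have hnorm : ‖act l v‖ = 1 := by rw [norm_act_unitary hl, hv1]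
    calc ‖act m v‖ = ‖act (Matrix.diagonal σ) (act l v)‖ := hact v
      _ ≤ σ i₀ * ‖act l v‖ := by
          refine norm_act_diagonal_le σ (fun i => ¬ ((i:ℕ) < q - 1)) _ (hσ0 i₀) hc0 ?_
          intro j hj
          rw [abs_of_nonneg (hσ0 j)]
          refine hσd i₀ j ?_
          rw [Fin.le_def, hi₀v]
          omega
      _ = σ i₀ := by rw [hnorm, mul_one]
  · -- lower bound
    set P₀ : Submodule ℝ (Euc d) :=
      Submodule.span ℝ {x : Euc d | ∃ i : Fin d, (i:ℕ) < q ∧ x = col (star l) i} with hP₀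
    have hP₀rank : Module.finrank ℝ P₀ = q := by
      rw [hP₀, finrank_span_cols hls]
      have := card_lt_subtype (d := d) q hqd
      convert this using 2
    have hbound : σ i₀ ≤ sInf (stretchSet m P₀) := by
      refine le_csInf ?_ ?_
      · refine ⟨‖act m (col (star l) ⟨0, hd⟩)‖, col (star l) ⟨0, hd⟩, ?_, ?_, rfl⟩
        · refine Submodule.subset_span ⟨⟨0, hd⟩, ?_, rfl⟩
          simp only [Fin.val_mk]
          omega
        · exact (orthonormal_cols hls).1 _
      · rintro t ⟨v, hvP, hv1, rfl⟩
        have hc0 : ∀ j : Fin d, ¬ ((j:ℕ) < q) → act (star (star l)) v j = 0 :=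
          (mem_span_cols hls (fun i => (i:ℕ) < q) v).mp hvP
        rw [star_star] at hc0
        have hnorm : ‖act l v‖ = 1 := by rw [norm_act_unitary hl, hv1]
        calc σ i₀ = σ i₀ * ‖act l v‖ := by rw [hnorm, mul_one]
          _ ≤ ‖act (Matrix.diagonal σ) (act l v)‖ := by
              refine norm_act_diagonal_ge σ (fun i => (i:ℕ) < q) _ (hσ0 i₀) hc0 ?_
              intro j hj
              refine hσd j i₀ ?_
              rw [Fin.le_def, hi₀v]
              omega
          _ = ‖act m v‖ := (hact v).symm
    refine le_trans hbound ?_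
    rw [sv_eq_sSup]
    exact le_csSup (sv_set_bddAbove m q) ⟨P₀, hP₀rank, rfl⟩

end CF


section SVD

variable {d : ℕ}

lemma conj_diag_apply (A : Matrix (Fin d) (Fin d) ℝ) (f : Fin d → ℝ) (i j : Fin d) :
    (A * Matrix.diagonal f * star A) i j = ∑ x, A i x * f x * A j x := by
  rw [Matrix.mul_apply]
  congr 1
  ext x
  rw [Matrix.mul_diagonal]
  simp [Matrix.star_apply, mul_comm]

lemma perm_unitary {V : Matrix (Fin d) (Fin d) ℝ} (hV : V ∈ Matrix.unitaryGroup (Fin d) ℝ)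
    (τ : Equiv.Perm (Fin d)) :
    V.submatrix id τ ∈ Matrix.unitaryGroup (Fin d) ℝ := by
  rw [Matrix.mem_unitaryGroup_iff']
  have h := Matrix.mem_unitaryGroup_iff'.mp hV
  ext i j
  rw [Matrix.mul_apply]
  have h2 := congrFun (congrFun h (τ i)) (τ j)
  rw [Matrix.mul_apply] at h2
  simp only [Matrix.submatrix_apply, id_eq, Matrix.star_apply, Matrix.one_apply]
  simp only [Matrix.star_apply, Matrix.one_apply] at h2
  rw [h2]
  simp [Equiv.apply_eq_iff_eq]

lemma conj_perm (V : Matrix (Fin d) (Fin d) ℝ) (f : Fin d → ℝ) (τ : Equiv.Perm (Fin d)) :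
    V.submatrix id τ * Matrix.diagonal (f ∘ τ) * star (V.submatrix id τ)
      = V * Matrix.diagonal f * star V := by
  ext i j
  rw [conj_diag_apply, conj_diag_apply]
  exact Fintype.sum_equiv τ _ _ (fun x => by simp)

lemma star_diagonal (f : Fin d → ℝ) :
    star (Matrix.diagonal f) = Matrix.diagonal f := by
  rw [Matrix.star_eq_conjTranspose, Matrix.diagonal_conjTranspose]
  congr 1

lemma exists_svd (m : Matrix (Fin d) (Fin d) ℝ) (hm : IsUnit m.det) :
    ∃ k l : Matrix (Fin d) (Fin d) ℝ, ∃ σ : Fin d → ℝ,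
      k ∈ Matrix.unitaryGroup (Fin d) ℝ ∧ l ∈ Matrix.unitaryGroup (Fin d) ℝ ∧
      (∀ i j : Fin d, i ≤ j → σ j ≤ σ i) ∧ (∀ i, 0 ≤ σ i) ∧
      m = k * Matrix.diagonal σ * l := by
  have hS : (mᴴ * m).IsHermitian := Matrix.isHermitian_conjTranspose_mul_self m
  set μ := hS.eigenvalues with hμ
  have hμ0 : ∀ i, 0 ≤ μ i := (Matrix.posSemidef_conjTranspose_mul_self m).eigenvalues_nonneg
  have hdetne : (mᴴ * m).det ≠ 0 := by
    rw [Matrix.det_mul, Matrix.det_conjTranspose]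
    exact mul_ne_zero (by simpa using hm.ne_zero) hm.ne_zero
  have hμpos : ∀ i, 0 < μ i := by
    intro i
    rcases lt_or_eq_of_le (hμ0 i) with h | h
    · exact h
    · exfalso
      apply hdetne
      rw [hS.det_eq_prod_eigenvalues]
      refine Finset.prod_eq_zero (Finset.mem_univ i) ?_
      exact h.symm
  set τ := Tuple.sort (fun i => -μ i) with hτ
  have hmono := Tuple.monotone_sort (fun i => -μ i)
  set σ := fun i => Real.sqrt (μ (τ i)) with hσ
  have hσpos : ∀ i, 0 < σ i := fun i => Real.sqrt_pos.mpr (hμpos _)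
  have hσsq : ∀ i, σ i * σ i = μ (τ i) := fun i => Real.mul_self_sqrt (hμ0 _)
  have hσd : ∀ i j : Fin d, i ≤ j → σ j ≤ σ i := by
    intro i j hij
    have := hmono hij
    simp only [Function.comp_apply, neg_le_neg_iff] at this
    exact Real.sqrt_le_sqrt this
  set V := (hS.eigenvectorUnitary : Matrix (Fin d) (Fin d) ℝ) with hV
  have hVu : V ∈ Matrix.unitaryGroup (Fin d) ℝ := hS.eigenvectorUnitary.2
  set W := V.submatrix id τ with hWdef
  have hWu : W ∈ Matrix.unitaryGroup (Fin d) ℝ := perm_unitary hVu τ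
  have hspec : mᴴ * m = W * Matrix.diagonal (μ ∘ τ) * star W := by
    rw [hWdef, conj_perm]
    convert hS.spectral_theorem using 2
    all_goals
      funext i
      simp [hμ]
      rfl
  set k := m * W * Matrix.diagonal (fun i => (σ i)⁻¹) with hkdef
  have hdmul : Matrix.diagonal (fun i => (σ i)⁻¹) * Matrix.diagonal (μ ∘ τ)
      * Matrix.diagonal (fun i => (σ i)⁻¹) = 1 := by
    rw [Matrix.diagonal_mul_diagonal, Matrix.diagonal_mul_diagonal, ← Matrix.diagonal_one]
    refine congrArg Matrix.diagonal (funext fun i => ?_)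
    simp only [Function.comp_apply, Pi.one_apply]
    rw [← hσsq i]
    have h2 := (hσpos i).ne'
    field_simp
  have hstark : star k = Matrix.diagonal (fun i => (σ i)⁻¹) * star W * mᴴ := by
    rw [hkdef, Matrix.star_eq_conjTranspose, Matrix.conjTranspose_mul,
      Matrix.conjTranspose_mul, ← Matrix.star_eq_conjTranspose (Matrix.diagonal _),
      star_diagonal, ← Matrix.star_eq_conjTranspose W, Matrix.mul_assoc]
  have hWW : star W * W = 1 := Matrix.mem_unitaryGroup_iff'.mp hWu
  have hWW' : W * star W = 1 := Matrix.mem_unitaryGroup_iff.mp hWu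
  have hku : k ∈ Matrix.unitaryGroup (Fin d) ℝ := by
    rw [Matrix.mem_unitaryGroup_iff', hstark]
    calc Matrix.diagonal (fun i => (σ i)⁻¹) * star W * mᴴ * (m * W
          * Matrix.diagonal (fun i => (σ i)⁻¹))
        = Matrix.diagonal (fun i => (σ i)⁻¹) * (star W * (mᴴ * m) * W)
          * Matrix.diagonal (fun i => (σ i)⁻¹) := by
          simp only [Matrix.mul_assoc]
      _ = Matrix.diagonal (fun i => (σ i)⁻¹) * (star W * (W * Matrix.diagonal (μ ∘ τ)
          * star W) * W) * Matrix.diagonal (fun i => (σ i)⁻¹) := by rw [← hspec]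
      _ = Matrix.diagonal (fun i => (σ i)⁻¹) * ((star W * W) * Matrix.diagonal (μ ∘ τ)
          * (star W * W)) * Matrix.diagonal (fun i => (σ i)⁻¹) := by
          simp only [Matrix.mul_assoc]
      _ = 1 := by
          rw [hWW, Matrix.one_mul, Matrix.mul_one]
          exact hdmul
  refine ⟨k, star W, σ, hku, Unitary.star_mem hWu, hσd, fun i => (hσpos i).le, ?_⟩
  have hdd : Matrix.diagonal (fun i => (σ i)⁻¹) * Matrix.diagonal σ = 1 := by
    rw [Matrix.diagonal_mul_diagonal, ← Matrix.diagonal_one]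
    refine congrArg Matrix.diagonal (funext fun i => ?_)
    exact inv_mul_cancel₀ (hσpos i).ne'
  rw [hkdef]
  symm
  calc m * W * Matrix.diagonal (fun i => (σ i)⁻¹) * Matrix.diagonal σ * star W
      = m * W * (Matrix.diagonal (fun i => (σ i)⁻¹) * Matrix.diagonal σ) * star W := by
        simp only [Matrix.mul_assoc]
    _ = m * (W * star W) := by rw [hdd, Matrix.mul_one, Matrix.mul_assoc]
    _ = m := by rw [hWW', Matrix.mul_one]

lemma exists_cartan (m : Matrix (Fin d) (Fin d) ℝ) (hm : IsUnit m.det) (p : ℕ) :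
    ∃ U, IsCartanAttractor m p U := by
  obtain ⟨k, l, σ, hk, hl, hσd, hσ0, hfact⟩ := exists_svd m hm
  exact ⟨_, k, l, σ, hk, hl, hσd, hσ0, hfact, rfl⟩

lemma cartanAttractor_spec (m : Matrix (Fin d) (Fin d) ℝ) (hm : IsUnit m.det) (p : ℕ) :
    IsCartanAttractor m p (cartanAttractor m p) := by
  have hE := exists_cartan m hm p
  rw [cartanAttractor]
  rw [dif_pos hE]
  exact hE.choose_spec

lemma sigma_pos_of_svd {m k l : Matrix (Fin d) (Fin d) ℝ} {σ : Fin d → ℝ}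
    (hm : IsUnit m.det) (hσ0 : ∀ i, 0 ≤ σ i)
    (hfact : m = k * Matrix.diagonal σ * l) : ∀ i, 0 < σ i := by
  intro i
  rcases lt_or_eq_of_le (hσ0 i) with h | h
  · exact h
  · exfalso
    apply hm.ne_zero
    rw [hfact, Matrix.det_mul, Matrix.det_mul, Matrix.det_diagonal]
    rw [Finset.prod_eq_zero (Finset.mem_univ i) (by rw [← h])]
    ring

end SVD


section Comp

variable {d : ℕ}

lemma mapMat_mapMat (A B : Matrix (Fin d) (Fin d) ℝ) (P : Submodule ℝ (Euc d)) :
    mapMat A (mapMat B P) = mapMat (A * B) P := by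
  unfold mapMat
  rw [← Submodule.map_comp]
  congr 1
  exact LinearMap.ext fun x => (act_mul A B x).symm

lemma mapMat_one (P : Submodule ℝ (Euc d)) : mapMat 1 P = P := by
  unfold mapMat
  have h : (((Matrix.toEuclideanCLM (𝕜 := ℝ) (1 : Matrix (Fin d) (Fin d) ℝ) :
      Euc d →L[ℝ] Euc d)) : Euc d →ₗ[ℝ] Euc d) = LinearMap.id :=
    LinearMap.ext fun x => act_one x
  rw [h, Submodule.map_id]

lemma mem_mapMat {A : Matrix (Fin d) (Fin d) ℝ} {P : Submodule ℝ (Euc d)} {w : Euc d} :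
    w ∈ mapMat A P ↔ ∃ z ∈ P, act A z = w := by
  unfold mapMat
  exact Submodule.mem_map

lemma finrank_mapMat_eq {N Ninv : Matrix (Fin d) (Fin d) ℝ}
    (hNN : N * Ninv = 1) (P : Submodule ℝ (Euc d)) :
    Module.finrank ℝ (mapMat Ninv P) = Module.finrank ℝ P := by
  refine le_antisymm (Submodule.finrank_map_le _ P) ?_
  have h : mapMat N (mapMat Ninv P) = P := by
    rw [mapMat_mapMat, hNN, mapMat_one]
  conv_lhs => rw [← h]
  exact Submodule.finrank_map_le _ (mapMat Ninv P)

lemma sv_comp_le (M N Ninv : Matrix (Fin d) (Fin d) ℝ)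
    (hNN : N * Ninv = 1) (hNN' : Ninv * N = 1) (q : ℕ) (hq1 : 1 ≤ q)
    (h0 : 0 ≤ sv (M * N) q) :
    sv M q ≤ opNorm Ninv * sv (M * N) q := by
  rw [sv_eq_sSup]
  refine Real.sSup_le ?_ (mul_nonneg (opNorm_nonneg _) h0)
  rintro r ⟨P, hPrank, rfl⟩
  set Q := mapMat Ninv P with hQ
  have hQrank : Module.finrank ℝ Q = q := by rw [hQ, finrank_mapMat_eq hNN, hPrank]
  have hQbot : Q ≠ ⊥ := by
    intro hbot
    rw [hbot, finrank_bot] at hQrank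
    omega
  obtain ⟨u0, hu0Q, hu01⟩ := exists_unit_of_ne_bot hQbot
  have claim : ∀ t ∈ stretchSet (M * N) Q, sInf (stretchSet M P) ≤ opNorm Ninv * t := by
    rintro t ⟨w, hwQ, hw1, rfl⟩
    obtain ⟨z', hz'P, hz'w⟩ := mem_mapMat.mp hwQ
    have hz : act N w ∈ P := by
      rw [← hz'w, ← act_mul, hNN, act_one]
      exact hz'P
    set z := act N w with hzdef
    have hzn : 1 ≤ opNorm Ninv * ‖z‖ := by
      have h1 : act Ninv z = w := by
        rw [hzdef, ← act_mul, hNN', act_one]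
      calc (1:ℝ) = ‖w‖ := hw1.symm
        _ = ‖act Ninv z‖ := by rw [h1]
        _ ≤ opNorm Ninv * ‖z‖ := norm_act_le _ _
    have hzne : z ≠ 0 := by
      intro hz0
      rw [hz0, norm_zero, mul_zero] at hzn
      linarith
    have hznpos : 0 < ‖z‖ := norm_pos_iff.mpr hzne
    set v := ‖z‖⁻¹ • z with hv
    have hvP : v ∈ P := P.smul_mem _ hz
    have hv1 : ‖v‖ = 1 := norm_smul_inv_norm hzne
    refine le_trans (csInf_le (stretchSet_bddBelow M P) ⟨v, hvP, hv1, rfl⟩) ?_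
    have hMv : ‖act M v‖ = ‖z‖⁻¹ * ‖act M z‖ := by
      rw [hv, act_smul, norm_smul, norm_inv, norm_norm]
    have hMz : act M z = act (M * N) w := by rw [hzdef, act_mul]
    rw [hMv, hMz]
    have hx0 : 0 ≤ ‖act (M * N) w‖ := norm_nonneg _
    rw [inv_mul_le_iff₀ hznpos]
    nlinarith
  rcases eq_or_lt_of_le (opNorm_nonneg Ninv) with hc | hc
  · have h1 := claim _ ⟨u0, hu0Q, hu01, rfl⟩
    rw [← hc] at h1 ⊢
    simpa using h1
  · have h1 : sInf (stretchSet M P) / opNorm Ninv ≤ sInf (stretchSet (M * N) Q) := by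
      refine le_csInf ⟨_, u0, hu0Q, hu01, rfl⟩ ?_
      intro t ht
      rw [div_le_iff₀ hc]
      calc sInf (stretchSet M P) ≤ opNorm Ninv * t := claim t ht
        _ = t * opNorm Ninv := mul_comm _ _
    have h2 : sInf (stretchSet (M * N) Q) ≤ sv (M * N) q := by
      rw [sv_eq_sSup]
      exact le_csSup (sv_set_bddAbove _ q) ⟨Q, hQrank, rfl⟩
    rw [div_le_iff₀ hc] at h1
    calc sInf (stretchSet M P) ≤ sInf (stretchSet (M * N) Q) * opNorm Ninv := h1
      _ ≤ sv (M * N) q * opNorm Ninv := mul_le_mul_of_nonneg_right h2 hc.le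
      _ = opNorm Ninv * sv (M * N) q := mul_comm _ _

end Comp

section Geometry

variable {d : ℕ}

lemma sinAngle_nonneg (v w : Euc d) : 0 ≤ sinAngle v w :=
  Real.sin_nonneg_of_nonneg_of_le_pi (InnerProductGeometry.angle_nonneg v w)
    (InnerProductGeometry.angle_le_pi v w)

lemma sinAngle_le_one (v w : Euc d) : sinAngle v w ≤ 1 := Real.sin_le_one _

lemma sinAngle_smul_left (v w : Euc d) {r : ℝ} (hr : 0 < r) :
    sinAngle (r • v) w = sinAngle v w := by
  unfold sinAngle
  rw [InnerProductGeometry.angle_smul_left_of_pos v w hr]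

lemma sinAngle_le_norm_sub {v x : Euc d} (hv : ‖v‖ = 1) (hx : x ≠ 0) :
    sinAngle v x ≤ ‖v - x‖ := by
  have hnx : 0 < ‖x‖ := norm_pos_iff.mpr hx
  have h := InnerProductGeometry.sin_angle_mul_norm_mul_norm v x
  rw [hv, one_mul] at h
  have hvv : ⟪v, v⟫ = 1 := by
    rw [real_inner_self_eq_norm_sq, hv]
    norm_num
  have hxx : ⟪x, x⟫ = ‖x‖ ^ 2 := real_inner_self_eq_norm_sq x
  rw [hvv, hxx, one_mul] at h
  have hsub : ‖v - x‖ ^ 2 = 1 - 2 * ⟪v, x⟫ + ‖x‖ ^ 2 := by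
    rw [norm_sub_sq_real, hv]
    ring
  have hkey : Real.sqrt (‖x‖ ^ 2 - ⟪v, x⟫ * ⟪v, x⟫) ≤ ‖x‖ * ‖v - x‖ := by
    have h1 : ‖x‖ ^ 2 - ⟪v, x⟫ * ⟪v, x⟫ ≤ (‖x‖ * ‖v - x‖) ^ 2 := by
      have h2 : (‖x‖ * ‖v - x‖) ^ 2 = ‖x‖ ^ 2 * ‖v - x‖ ^ 2 := by ring
      rw [h2, hsub]
      nlinarith [sq_nonneg (⟪v, x⟫ - ‖x‖ ^ 2)]
    calc Real.sqrt (‖x‖ ^ 2 - ⟪v, x⟫ * ⟪v, x⟫) ≤ Real.sqrt ((‖x‖ * ‖v - x‖) ^ 2) :=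
          Real.sqrt_le_sqrt h1
      _ = ‖x‖ * ‖v - x‖ := Real.sqrt_sq (mul_nonneg (norm_nonneg x) (norm_nonneg (v - x)))
  have hfin : sinAngle v x * ‖x‖ ≤ ‖x‖ * ‖v - x‖ := by
    unfold sinAngle
    rw [h]
    exact hkey
  refine le_of_mul_le_mul_right ?_ hnx
  rw [mul_comm ‖x‖ ‖v - x‖] at hfin
  exact hfin

end Geometry

/-- Lemma A.4 (1) of [BPS]. -/
theorem stmt0 {d : ℕ} (p : ℕ) (hp1 : 1 ≤ p) (hpd : p ≤ d - 1)
    (g h : GL (Fin d) ℝ)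
    (hg : HasGap (mat g) p) (hh : HasGap (mat h) p)
    (hgh : HasGap (mat (g * h)) p) :
    grassDist (cartanAttractor (mat (g * h)) p) (cartanAttractor (mat g) p) ≤
      opNorm (mat h) * opNorm (mat (h⁻¹)) *
        (sv (mat g) (p + 1) / sv (mat g) p) := by
  have hd2 : 2 ≤ d := by omega
  have hd : 0 < d := by omega
  have hpd' : p + 1 ≤ d := by omega
  have hdg : IsUnit (mat g).det := (Matrix.isUnit_iff_isUnit_det _).mp g.isUnit
  have hdgh : IsUnit (mat (g * h)).det := (Matrix.isUnit_iff_isUnit_det _).mp (g * h).isUnit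
  have hmul : mat (g * h) = mat g * mat h := Units.val_mul g h
  obtain ⟨k, l, σ, hk, hl, hσd, hσ0, hfg, hUg⟩ := cartanAttractor_spec (mat g) hdg p
  obtain ⟨k₁, l₁, α, hk₁, hl₁, hαd, hα0, hfgh, hUgh⟩ :=
    cartanAttractor_spec (mat (g * h)) hdgh p
  have hσpos := sigma_pos_of_svd hdg hσ0 hfg
  have hαpos := sigma_pos_of_svd hdgh hα0 hfgh
  set i1 : Fin d := ⟨p - 1, by omega⟩ with hi1
  set i2 : Fin d := ⟨p, by omega⟩ with hi2
  have hi1v : (i1 : ℕ) = p - 1 := rfl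
  have hi2v : (i2 : ℕ) = p := rfl
  have hs1 : sv (mat g) p = σ i1 := sv_eq_of_svd _ k l σ hk hl hσd hσ0 hfg p hp1 (by omega)
  have hs2 : sv (mat g) (p + 1) = σ i2 :=
    sv_eq_of_svd _ k l σ hk hl hσd hσ0 hfg (p + 1) (by omega) hpd'
  have hA : sv (mat (g * h)) p = α i1 :=
    sv_eq_of_svd _ k₁ l₁ α hk₁ hl₁ hαd hα0 hfgh p hp1 (by omega)
  set N1 := opNorm (mat h) with hN1
  set N2 := opNorm (mat (h⁻¹)) with hN2
  have hs1pos : 0 < sv (mat g) p := hs1 ▸ hσpos i1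
  have hs2nn : 0 ≤ sv (mat g) (p + 1) := hs2 ▸ (hσpos i2).le
  have hNN : mat h * mat (h⁻¹) = 1 := by
    rw [mat, mat, ← Units.val_mul, mul_inv_cancel, Units.val_one]
  have hNN' : mat (h⁻¹) * mat h = 1 := by
    rw [mat, mat, ← Units.val_mul, inv_mul_cancel, Units.val_one]
  have hcomp : sv (mat g) p ≤ N2 * α i1 := by
    have h0 : 0 ≤ sv (mat g * mat h) p := by
      rw [← hmul, hA]; exact (hαpos i1).le
    have h1 := sv_comp_le (mat g) (mat h) (mat (h⁻¹)) hNN hNN' p hp1 h0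
    rw [← hmul, hA] at h1
    exact h1
  set C := N1 * N2 * (sv (mat g) (p + 1) / sv (mat g) p) with hC
  have hC0 : 0 ≤ C := by
    refine mul_nonneg (mul_nonneg (opNorm_nonneg _) (opNorm_nonneg _)) ?_
    exact div_nonneg hs2nn hs1pos.le
  refine Real.sSup_le ?_ hC0
  rintro r ⟨v, hvU, hvne, rfl⟩
  have hrpos : 0 < ‖v‖⁻¹ := by
    rw [inv_pos]
    exact norm_pos_iff.mpr hvne
  set v' := ‖v‖⁻¹ • v with hv'
  have hv'U : v' ∈ cartanAttractor (mat (g * h)) p := Submodule.smul_mem _ _ hvU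
  have hv'1 : ‖v'‖ = 1 := norm_smul_inv_norm hvne
  have hbb : BddBelow {s | ∃ w ∈ cartanAttractor (mat g) p, w ≠ 0 ∧ s = sinAngle v w} := by
    refine ⟨0, ?_⟩
    rintro s ⟨w, -, -, rfl⟩
    exact sinAngle_nonneg v w
  -- construct the approximant x ∈ U'
  rw [hUgh] at hv'U
  have hcsupp : ∀ j : Fin d, ¬ ((j:ℕ) < p) → act (star k₁) v' j = 0 :=
    (mem_span_cols hk₁ (fun i => (i:ℕ) < p) v').mp hv'U
  set c := act (star k₁) v' with hcdef
  have hv'c : v' = act k₁ c := (act_act_star_unitary hk₁ v').symm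
  have hk₁s : star k₁ ∈ Matrix.unitaryGroup (Fin d) ℝ := Unitary.star_mem hk₁
  have hl₁s : star l₁ ∈ Matrix.unitaryGroup (Fin d) ℝ := Unitary.star_mem hl₁
  have hc1 : ‖c‖ = 1 := by rw [hcdef, norm_act_unitary hk₁s, hv'1]
  set αinv := fun i => (α i)⁻¹ with hαinv
  set u := act (star l₁) (act (Matrix.diagonal αinv) c) with hu
  have hunorm : ‖u‖ ≤ (α i1)⁻¹ := by
    rw [hu, norm_act_unitary hl₁s]
    have hb := norm_act_diagonal_le αinv (fun i => (i:ℕ) < p) c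
      (inv_nonneg.mpr (hαpos i1).le) hcsupp ?_
    · rw [hc1, mul_one] at hb
      exact hb
    · intro j hj
      have hji : j ≤ i1 := Fin.le_def.mpr (by omega)
      rw [hαinv]
      rw [abs_of_nonneg (inv_nonneg.mpr (hαpos j).le)]
      exact inv_anti₀ (hαpos i1) (hαd j i1 hji)
  have e1 : act (Matrix.diagonal α) (act (Matrix.diagonal αinv) c) = c := by
    rw [← act_mul, Matrix.diagonal_mul_diagonal]
    have hone : (fun i => α i * αinv i) = fun _ => (1:ℝ) :=
      funext fun i => mul_inv_cancel₀ (hαpos i).ne'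
    rw [hone, Matrix.diagonal_one, act_one]
  have hvact : v' = act (mat g) (act (mat h) u) := by
    calc v' = act k₁ c := hv'c
      _ = act k₁ (act (Matrix.diagonal α) (act l₁ u)) := by
          rw [hu, act_act_star_unitary hl₁, e1]
      _ = act (k₁ * Matrix.diagonal α * l₁) u := by rw [act_mul, act_mul]
      _ = act (mat (g * h)) u := by rw [← hfgh]
      _ = act (mat g) (act (mat h) u) := by rw [hmul, act_mul]
  set w1 := act (mat h) u with hw1def
  set t := act l w1 with ht
  set t₁ : Euc d :=
    (EuclideanSpace.equiv (Fin d) ℝ).symm (fun j => if (j:ℕ) < p then t j else 0) with ht₁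
  set t₂ := t - t₁ with ht₂
  have ht₁j : ∀ j : Fin d, t₁ j = if (j:ℕ) < p then t j else 0 := fun j => rfl
  have ht₂j : ∀ j : Fin d, t₂ j = t j - t₁ j := fun j => rfl
  set x := act k (act (Matrix.diagonal σ) t₁) with hx
  have hxU' : x ∈ cartanAttractor (mat g) p := by
    rw [hUg]
    refine (mem_span_cols hk (fun i => (i:ℕ) < p) x).mpr ?_
    intro j hj
    rw [hx, act_star_act_unitary hk, act_diagonal_apply, ht₁j, if_neg hj, mul_zero]
  have hvx : v' - x = act k (act (Matrix.diagonal σ) t₂) := by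
    have hv'k : v' = act k (act (Matrix.diagonal σ) t) := by
      rw [hvact, hfg, act_mul, act_mul, ht, hw1def]
    rw [hv'k, hx, ht₂, act_sub, act_sub]
  have ht₂t : ‖t₂‖ ≤ ‖t‖ := by
    refine le_of_sq_le (norm_nonneg _) (norm_nonneg _) ?_
    rw [norm_sq_eq, norm_sq_eq]
    refine Finset.sum_le_sum fun j _ => ?_
    rw [ht₂j, ht₁j]
    by_cases hj : (j:ℕ) < p
    · rw [if_pos hj, sub_self]
      simpa using sq_nonneg (t j)
    · rw [if_neg hj]
      simp
  have hnormvx : ‖v' - x‖ ≤ σ i2 * ‖t₂‖ := by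
    rw [hvx, norm_act_unitary hk]
    have hb := norm_act_diagonal_le σ (fun j => ¬ ((j:ℕ) < p)) t₂ (hσ0 i2) ?_ ?_
    · exact hb
    · intro j hj
      have hj' : (j:ℕ) < p := not_not.mp hj
      rw [ht₂j, ht₁j, if_pos hj', sub_self]
    · intro j hj
      rw [abs_of_nonneg (hσ0 j)]
      exact hσd i2 j (Fin.le_def.mpr (by omega))
  have htw : ‖t‖ = ‖w1‖ := by rw [ht, norm_act_unitary hl]
  have hw1n : ‖w1‖ ≤ N1 * ‖u‖ := norm_act_le _ _
  have hAinv : (α i1)⁻¹ ≤ N2 / sv (mat g) p := by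
    rw [le_div_iff₀ hs1pos]
    calc (α i1)⁻¹ * sv (mat g) p ≤ (α i1)⁻¹ * (N2 * α i1) :=
          mul_le_mul_of_nonneg_left hcomp (inv_nonneg.mpr (hαpos i1).le)
      _ = N2 := by
          rw [mul_comm N2 (α i1), ← mul_assoc, inv_mul_cancel₀ (hαpos i1).ne', one_mul]
  have hvxC : ‖v' - x‖ ≤ C := by
    calc ‖v' - x‖ ≤ σ i2 * ‖t₂‖ := hnormvx
      _ ≤ σ i2 * (N1 * (α i1)⁻¹) := by
          refine mul_le_mul_of_nonneg_left ?_ (hσ0 i2)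
          calc ‖t₂‖ ≤ ‖t‖ := ht₂t
            _ = ‖w1‖ := htw
            _ ≤ N1 * ‖u‖ := hw1n
            _ ≤ N1 * (α i1)⁻¹ := mul_le_mul_of_nonneg_left hunorm (opNorm_nonneg _)
      _ ≤ σ i2 * (N1 * (N2 / sv (mat g) p)) :=
          mul_le_mul_of_nonneg_left
            (mul_le_mul_of_nonneg_left hAinv (opNorm_nonneg _)) (hσ0 i2)
      _ = C := by rw [hC, hs2]; ring
  by_cases hC1 : (1:ℝ) ≤ C
  · set w0 := col k ⟨0, hd⟩ with hw0
    have hw0U' : w0 ∈ cartanAttractor (mat g) p := by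
      rw [hUg]
      exact Submodule.subset_span ⟨⟨0, hd⟩, by simp only [Fin.val_mk]; omega, rfl⟩
    have hw0n : ‖w0‖ = 1 := (orthonormal_cols hk).1 _
    have hw0ne : w0 ≠ 0 := by
      intro h0
      rw [h0, norm_zero] at hw0n
      norm_num at hw0n
    refine le_trans (csInf_le hbb ⟨w0, hw0U', hw0ne, rfl⟩) ?_
    exact le_trans (sinAngle_le_one v w0) hC1
  · push_neg at hC1
    have hxne : x ≠ 0 := by
      intro h0
      rw [h0, sub_zero, hv'1] at hvxC
      linarith
    refine le_trans (csInf_le hbb ⟨x, hxU', hxne, rfl⟩) ?_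
    calc sinAngle v x = sinAngle v' x := (sinAngle_smul_left v x hrpos).symm
      _ ≤ ‖v' - x‖ := sinAngle_le_norm_sub hv'1 hxne
      _ ≤ C := hvxC

end Paper
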